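/- (Strips Theorem, two-sided tape) Let f be a partial function on natural numbers computed by a two-sided Turing machine with binary input/output where the output may be read off shifted by some fixed offset. If f halts on input i, then there exist natural numbers n, and an integer l, such that for all x, f(x·2^(n+1) + i) = f(i) + 2^l · (x·2^(n+1)). That is, f consists of strips of functions of the form a + 2^l·x with l ∈ ℤ. -/

import Mathlib

/-- A two-sided Turing machine: the transition table maps (state, color) to either
`none` (halt) or a triple (written color, move-right?, next state). -/
structure TM2 (σ : Type) where
  trans : σ → Bool → Option (Bool × Bool × σ)
  init : σ

/-- A configuration of a two-sided machine: state, head position on a tape infinite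
in both directions, and tape contents. -/
structure Cfg2 (σ : Type) where
  state : σ
  pos : ℤ
  tape : ℤ → Bool

/-- One step: either a new configuration, or the final tape upon halting. -/
def TM2.stepA {σ : Type} (M : TM2 σ) (c : Cfg2 σ) : Sum (Cfg2 σ) (ℤ → Bool) :=
  match M.trans c.state (c.tape c.pos) with
  | none => Sum.inr c.tape
  | some r =>
      Sum.inl ⟨r.2.2, if r.2.1 then c.pos + 1 else c.pos - 1,
        Function.update c.tape c.pos r.1⟩

/-- Running the machine for `t` steps. -/
def TM2.run {σ : Type} (M : TM2 σ) (c : Cfg2 σ) : ℕ → Sum (Cfg2 σ) (ℤ → Bool)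
  | 0 => Sum.inl c
  | t + 1 =>
    match M.run c t with
    | Sum.inl c' => M.stepA c'
    | Sum.inr tp => Sum.inr tp

/-- Initial configuration on binary input `i`, written around the origin. -/
def initCfg2 {σ : Type} (M : TM2 σ) (i : ℕ) : Cfg2 σ :=
  ⟨M.init, 0, fun z => if 0 ≤ z then i.testBit z.toNat else false⟩

/-- `M` halts on binary input `i` with binary output `r`, where the output is read
off from the final tape relative to some (shifted) origin `d`. -/
def ComputesOn2 {σ : Type} (M : TM2 σ) (i r : ℕ) : Prop :=
  ∃ (t : ℕ) (tp : ℤ → Bool) (d : ℤ), M.run (initCfg2 M i) t = Sum.inr tp ∧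
    ∀ j : ℕ, tp (d + (j : ℤ)) = r.testBit j

lemma strips_testBit_add_mul (a x k j : ℕ) (ha : a < 2 ^ k) :
    (a + x * 2 ^ k).testBit j = if j < k then a.testBit j else x.testBit (j - k) := by
  have : a + x * 2 ^ k = 2 ^ k * x + a := by ring
  rw [this, Nat.testBit_two_pow_mul_add x ha j]

/-- Simulation lemma: two runs from the same state at the origin, on tapes that
agree on all cells `≤ n`, stay in lockstep for `t ≤ n` steps; cells `> n` are
never modified. -/
lemma strips_sim {σ : Type} (M : TM2 σ) (n : ℕ) (T1 T2 : ℤ → Bool)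
    (hagree : ∀ z : ℤ, z ≤ (n : ℤ) → T1 z = T2 z) :
    ∀ s : ℕ, s ≤ n →
      (∃ c1 c2 : Cfg2 σ,
        M.run ⟨M.init, 0, T1⟩ s = Sum.inl c1 ∧ M.run ⟨M.init, 0, T2⟩ s = Sum.inl c2 ∧
        c1.state = c2.state ∧ c1.pos = c2.pos ∧ c1.pos ≤ (s : ℤ) ∧
        (∀ z : ℤ, z ≤ (n : ℤ) → c1.tape z = c2.tape z) ∧
        (∀ z : ℤ, (n : ℤ) < z → c1.tape z = T1 z ∧ c2.tape z = T2 z))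
      ∨ (∃ tp1 tp2 : ℤ → Bool,
        M.run ⟨M.init, 0, T1⟩ s = Sum.inr tp1 ∧ M.run ⟨M.init, 0, T2⟩ s = Sum.inr tp2 ∧
        (∀ z : ℤ, z ≤ (n : ℤ) → tp1 z = tp2 z) ∧
        (∀ z : ℤ, (n : ℤ) < z → tp1 z = T1 z ∧ tp2 z = T2 z)) := by
  intro s
  induction s with
  | zero =>
    intro _
    left
    exact ⟨_, _, rfl, rfl, rfl, rfl, le_refl 0, hagree, fun z _ => ⟨rfl, rfl⟩⟩
  | succ s ih =>
    intro hs
    rcases ih (Nat.le_of_succ_le hs) with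
      ⟨c1, c2, h1, h2, hst, hpos, hposle, htl, hth⟩ | ⟨tp1, tp2, h1, h2, htl, hth⟩
    · -- both running; do one more step
      have hposn : c1.pos ≤ (n : ℤ) := by
        have : (s : ℤ) ≤ (n : ℤ) := by exact_mod_cast Nat.le_of_succ_le hs
        omega
      have hread : c1.tape c1.pos = c2.tape c2.pos := by
        rw [← hpos]; exact htl _ hposn
      simp only [TM2.run, h1, h2]
      unfold TM2.stepA
      rw [hst, hread]
      cases htr : M.trans c2.state (c2.tape c2.pos) with
      | none =>
        right
        refine ⟨c1.tape, c2.tape, rfl, rfl, htl, hth⟩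
      | some tr =>
        left
        refine ⟨_, _, rfl, rfl, rfl, by simp [hpos], ?_, ?_, ?_⟩
        · simp only
          split <;> omega
        · intro z hz
          dsimp only
          rw [hpos]
          by_cases h : z = c2.pos
          · subst h
            rw [Function.update_self, Function.update_self]
          · rw [Function.update_of_ne h, Function.update_of_ne h]
            exact htl z hz
        · intro z hz
          dsimp only
          have hne1 : z ≠ c1.pos := by omega
          have hne2 : z ≠ c2.pos := by rw [← hpos]; omega
          constructor
          · simp only [Function.update_of_ne hne1]
            exact (hth z hz).1
          · simp only [Function.update_of_ne hne2]
            exact (hth z hz).2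
    · right
      simp only [TM2.run, h1, h2]
      exact ⟨tp1, tp2, rfl, rfl, htl, hth⟩

/-- (Strips Theorem, two-sided tape.) If a two-sided Turing machine with binary
input/output (output possibly read at a shifted origin) halts on input `i` with
value `r = f(i)`, then there are `n : ℕ` and `l : ℤ` such that for all `x`, the
machine halts on input `x·2^(n+1) + i` with a value `rx` satisfying
`rx = f(i) + 2^l · (x·2^(n+1))`; i.e. `f` consists of strips of functions of the
form `a + 2^l·x` with `l ∈ ℤ`. -/
theorem strips_theorem_two_sided {σ : Type} (M : TM2 σ) (i r : ℕ)
    (hhalt : ComputesOn2 M i r) :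
    ∃ (n : ℕ) (l : ℤ), ∀ x : ℕ, ∃ rx : ℕ, ComputesOn2 M (x * 2 ^ (n + 1) + i) rx ∧
      (rx : ℚ) = (r : ℚ) + (2 : ℚ) ^ l * ((x : ℚ) * 2 ^ (n + 1)) := by
  obtain ⟨t, tp, d, hrun, hbits⟩ := hhalt
  set n : ℕ := t + i + d.toNat with hn
  have htn : t ≤ n := by omega
  have hdn : d ≤ (n : ℤ) := by omega
  have hi : i < 2 ^ (n + 1) :=
    lt_of_lt_of_le (Nat.lt_two_pow_self (n := i)) (Nat.pow_le_pow_right (by norm_num) (by omega))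
  set k : ℕ := ((n : ℤ) + 1 - d).toNat with hk
  have hkz : (k : ℤ) = (n : ℤ) + 1 - d := by omega
  refine ⟨n, -d, fun x => ?_⟩
  -- bits of the new input
  have hinput : ∀ j : ℕ, (x * 2 ^ (n + 1) + i).testBit j =
      if j < n + 1 then i.testBit j else x.testBit (j - (n + 1)) := by
    intro j
    rw [Nat.add_comm, strips_testBit_add_mul i x (n + 1) j hi]
  -- the two initial tapes
  set T1 : ℤ → Bool := fun z => if 0 ≤ z then i.testBit z.toNat else false with hT1
  set T2 : ℤ → Bool :=
    fun z => if 0 ≤ z then (x * 2 ^ (n + 1) + i).testBit z.toNat else false with hT2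
  have hagree : ∀ z : ℤ, z ≤ (n : ℤ) → T1 z = T2 z := by
    intro z hz
    simp only [hT1, hT2]
    split
    · rw [hinput]
      rw [if_pos (by omega)]
    · rfl
  have hrun1 : M.run ⟨M.init, 0, T1⟩ t = Sum.inr tp := hrun
  rcases strips_sim M n T1 T2 hagree t htn with
    ⟨c1, c2, h1, _, _⟩ | ⟨tp1, tp2, h1, h2, htl, hth⟩
  · rw [hrun1] at h1; exact absurd h1 (by simp)
  · rw [hrun1] at h1
    have htp1 : tp1 = tp := by
      injection h1.symm
    subst htp1
    -- the original final tape is 0 above n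
    have htp_high : ∀ z : ℤ, (n : ℤ) < z → tp1 z = false := by
      intro z hz
      rw [(hth z hz).1]
      simp only [hT1]
      rw [if_pos (by omega)]
      exact Nat.testBit_lt_two_pow
        (lt_of_lt_of_le hi (Nat.pow_le_pow_right (by norm_num) (by omega)))
    -- the new final tape above n carries the bits of x
    have htp2_high : ∀ z : ℤ, (n : ℤ) < z →
        tp2 z = x.testBit (z.toNat - (n + 1)) := by
      intro z hz
      rw [(hth z hz).2]
      simp only [hT2]
      rw [if_pos (by omega), hinput, if_neg (by omega)]
    -- r has no bits at or above k
    have rhigh : ∀ j : ℕ, k ≤ j → r.testBit j = false := by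
      intro j hj
      rw [← hbits j]
      exact htp_high _ (by omega)
    have hrlt : r < 2 ^ k := by
      have : r = r % 2 ^ k := by
        apply Nat.eq_of_testBit_eq
        intro j
        rw [Nat.testBit_mod_two_pow]
        by_cases hjk : j < k
        · simp [hjk]
        · simp [hjk, rhigh j (by omega)]
      rw [this]
      exact Nat.mod_lt _ (Nat.pow_pos (by norm_num))
    refine ⟨r + x * 2 ^ k, ⟨t, tp2, d, h2, ?_⟩, ?_⟩
    · intro j
      rw [strips_testBit_add_mul r x k j hrlt]
      by_cases hjk : j < k
      · rw [if_pos hjk, ← hbits j]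
        exact (htl (d + (j : ℤ)) (by omega)).symm
      · rw [if_neg hjk]
        rw [htp2_high (d + (j : ℤ)) (by omega)]
        congr 1
        omega
    · have h2q : (2 : ℚ) ^ (k : ℕ) = (2 : ℚ) ^ (-d) * 2 ^ (n + 1) := by
        rw [← zpow_natCast (2 : ℚ) k, ← zpow_natCast (2 : ℚ) (n + 1),
          ← zpow_add₀ (by norm_num : (2 : ℚ) ≠ 0)]
        congr 1
        push_cast
        omega
      push_cast
      rw [h2q]
      ring
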